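/- For all positive integers r, w, d, s, t with w ≤ r, 0 < s ≤ r + w and t ≥ r + w, it holds that N((r,w;d),t) ≥ Σ_i C(s,i) · N((r−i, w−s+i; d), t−s), where the sum runs over all integers i with max(0, s−w) ≤ i ≤ min(r, s) and C(·,·) denotes the binomial coefficient. -/

import Mathlib

/-- `B : Fin t → Finset (Fin n)` is an (r,w;d)-cover-free family: for any disjoint
index sets `L, M` with `|L| = r`, `|M| = w`, the intersection of the blocks in `L`
has at least `d` elements outside the union of the blocks in `M`. -/
def IsCFF (r w d n t : ℕ) (B : Fin t → Finset (Fin n)) : Prop :=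
  ∀ L M : Finset (Fin t), Disjoint L M → L.card = r → M.card = w →
    d ≤ ((L.inf B) \ (M.sup B)).card

/-- `Ncff r w d t` = `N((r,w;d),t)`, the minimum number of points of an
(r,w;d)-CFF with `t` blocks, with the convention that it equals 1 if `r = 0` or `w = 0`. -/
noncomputable def Ncff (r w d t : ℕ) : ℕ :=
  if r = 0 ∨ w = 0 then 1
  else sInf {n : ℕ | ∃ B : Fin t → Finset (Fin n), IsCFF r w d n t B}

section Aux

open Finset

/-- CFFs always exist (on a large enough ground set). -/
lemma cff_exists (r w d t : ℕ) :
    ∃ n, ∃ B : Fin t → Finset (Fin n), IsCFF r w d n t B := by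
  classical
  refine ⟨2 ^ t * d, ?_⟩
  have hcard : Fintype.card (Finset (Fin t) × Fin d) = 2 ^ t * d := by simp
  let e : Finset (Fin t) × Fin d ≃ Fin (2 ^ t * d) := Fintype.equivFinOfCardEq hcard
  refine ⟨fun j => Finset.univ.filter (fun x => j ∈ (e.symm x).1 ∧ (e.symm x).1.card = r), ?_⟩
  intro L M hdisj hL hM
  have hinj : Function.Injective (fun k : Fin d => e (L, k)) := by
    intro a b hab
    simpa using e.injective hab
  have hsub : (Finset.univ.map ⟨fun k : Fin d => e (L, k), hinj⟩) ⊆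
      (L.inf fun j => Finset.univ.filter
        (fun x => j ∈ (e.symm x).1 ∧ (e.symm x).1.card = r)) \
      (M.sup fun j => Finset.univ.filter
        (fun x => j ∈ (e.symm x).1 ∧ (e.symm x).1.card = r)) := by
    intro x hx
    obtain ⟨k, -, rfl⟩ := Finset.mem_map.mp hx
    rw [Finset.mem_sdiff]
    constructor
    · rw [Finset.mem_inf]
      intro l hl
      simp only [Finset.mem_filter, Finset.mem_univ, true_and, Function.Embedding.coeFn_mk,
        Equiv.symm_apply_apply]
      exact ⟨hl, hL⟩
    · intro hcon
      obtain ⟨m, hm, hmem⟩ := Finset.mem_sup.mp hcon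
      simp only [Finset.mem_filter, Finset.mem_univ, true_and, Function.Embedding.coeFn_mk,
        Equiv.symm_apply_apply] at hmem
      exact (Finset.disjoint_left.mp hdisj hmem.1) hm
  calc d = (Finset.univ.map ⟨fun k : Fin d => e (L, k), hinj⟩).card := by simp
    _ ≤ _ := Finset.card_le_card hsub

variable {n t s : ℕ}

private def Fc (h : s ≤ t) : Fin s → Fin t := fun j => ⟨j, lt_of_lt_of_le j.isLt h⟩

private def Gc (s t : ℕ) : Fin (t - s) → Fin t := fun j => ⟨s + j, by have := j.isLt; omega⟩

private def Pset (B : Fin t → Finset (Fin n)) (F : Fin s → Fin t) (S : Finset (Fin s)) :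
    Finset (Fin n) :=
  Finset.univ.filter (fun x => ∀ j, x ∈ B (F j) ↔ j ∈ S)

private noncomputable def Bres (B : Fin t → Finset (Fin n)) (F : Fin s → Fin t)
    (S : Finset (Fin s)) : Fin (t - s) → Finset (Fin (Pset B F S).card) :=
  fun j => Finset.univ.filter (fun y => (((Pset B F S).equivFin.symm y : Fin n)) ∈ B (Gc s t j))

private lemma Fc_injective (h : s ≤ t) : Function.Injective (Fc h) := by
  intro a b hab
  have := congrArg Fin.val hab
  simp only [Fc] at this
  exact Fin.ext this

private lemma Gc_injective : Function.Injective (Gc s t) := by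
  intro a b hab
  have := congrArg Fin.val hab
  simp only [Gc] at this
  exact Fin.ext (by omega)

private lemma Fc_ne_Gc (h : s ≤ t) (a : Fin s) (b : Fin (t - s)) : Fc h a ≠ Gc s t b := by
  intro hab
  have := congrArg Fin.val hab
  simp only [Fc, Gc] at this
  have := a.isLt
  omega

/-- The restriction of the blocks outside an initial segment of size `s` to the set of
points with membership pattern `S` on the initial segment is again a CFF. -/
private lemma cff_sub (r w d : ℕ) (hst : s ≤ t)
    (B : Fin t → Finset (Fin n)) (hB : IsCFF r w d n t B) (S : Finset (Fin s))
    (hi1 : s - S.card ≤ w) (hi2 : S.card ≤ r) :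
    IsCFF (r - S.card) (w - (s - S.card)) d (Pset B (Fc hst) S).card (t - s)
      (Bres B (Fc hst) S) := by
  classical
  intro L' M' hdisj hL' hM'
  set i := S.card with hicard
  set F := Fc hst
  set G := Gc s t
  set e := (Pset B F S).equivFin with he
  set L : Finset (Fin t) := S.image F ∪ L'.image G with hLdef
  set M : Finset (Fin t) := (Finset.univ \ S).image F ∪ M'.image G with hMdef
  have hdisjFG : ∀ (SF : Finset (Fin s)) (SG : Finset (Fin (t - s))),
      Disjoint (SF.image F) (SG.image G) := by
    intro SF SG
    rw [Finset.disjoint_left]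
    rintro x hx1 hx2
    obtain ⟨a, -, rfl⟩ := Finset.mem_image.mp hx1
    obtain ⟨b, -, hb⟩ := Finset.mem_image.mp hx2
    exact Fc_ne_Gc hst a b hb.symm
  have hLcard : L.card = r := by
    rw [hLdef, Finset.card_union_of_disjoint (hdisjFG _ _),
      Finset.card_image_of_injective _ (Fc_injective hst),
      Finset.card_image_of_injective _ Gc_injective, hL']
    omega
  have hMcard : M.card = w := by
    rw [hMdef, Finset.card_union_of_disjoint (hdisjFG _ _),
      Finset.card_image_of_injective _ (Fc_injective hst),
      Finset.card_image_of_injective _ Gc_injective, hM',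
      Finset.card_sdiff_of_subset (Finset.subset_univ _), Finset.card_univ, Fintype.card_fin]
    omega
  have hLM : Disjoint L M := by
    rw [Finset.disjoint_left]
    rintro x hx1 hx2
    rcases Finset.mem_union.mp hx1 with h1 | h1 <;> rcases Finset.mem_union.mp hx2 with h2 | h2
    · obtain ⟨a, ha, rfl⟩ := Finset.mem_image.mp h1
      obtain ⟨b, hb, hba⟩ := Finset.mem_image.mp h2
      rw [Fc_injective hst hba] at hb
      exact (Finset.mem_sdiff.mp hb).2 ha
    · obtain ⟨a, -, rfl⟩ := Finset.mem_image.mp h1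
      obtain ⟨b, -, hb⟩ := Finset.mem_image.mp h2
      exact Fc_ne_Gc hst a b hb.symm
    · obtain ⟨a, -, rfl⟩ := Finset.mem_image.mp h2
      obtain ⟨b, -, hb⟩ := Finset.mem_image.mp h1
      exact Fc_ne_Gc hst a b hb.symm
    · obtain ⟨a, ha, rfl⟩ := Finset.mem_image.mp h1
      obtain ⟨b, hb, hba⟩ := Finset.mem_image.mp h2
      rw [Gc_injective hba] at hb
      exact Finset.disjoint_left.mp hdisj ha hb
  have hD := hB L M hLM hLcard hMcard
  set D := (L.inf B) \ (M.sup B) with hDdef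
  have hDsubP : ∀ x ∈ D, x ∈ Pset B F S := by
    intro x hx
    obtain ⟨hinf, hnsup⟩ := Finset.mem_sdiff.mp hx
    rw [Pset, Finset.mem_filter]
    refine ⟨Finset.mem_univ _, fun j => ?_⟩
    constructor
    · intro hxj
      by_contra hjS
      have hjM : F j ∈ M := Finset.mem_union_left _
        (Finset.mem_image_of_mem _ (Finset.mem_sdiff.mpr ⟨Finset.mem_univ _, hjS⟩))
      exact hnsup (Finset.mem_sup.mpr ⟨F j, hjM, hxj⟩)
    · intro hjS
      exact Finset.mem_inf.mp hinf (F j)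
        (Finset.mem_union_left _ (Finset.mem_image_of_mem _ hjS))
  have hDsub : D ⊆ Finset.image (fun y => ((e.symm y : {x // x ∈ Pset B F S}) : Fin n))
      ((L'.inf (Bres B F S)) \ (M'.sup (Bres B F S))) := by
    intro x hx
    obtain ⟨hinf, hnsup⟩ := Finset.mem_sdiff.mp hx
    have hxP : x ∈ Pset B F S := hDsubP x hx
    refine Finset.mem_image.mpr ⟨e ⟨x, hxP⟩, ?_, by simp⟩
    rw [Finset.mem_sdiff]
    constructor
    · rw [Finset.mem_inf]
      intro l hl
      rw [Bres, Finset.mem_filter]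
      refine ⟨Finset.mem_univ _, ?_⟩
      rw [← he, Equiv.symm_apply_apply]
      exact Finset.mem_inf.mp hinf (G l)
        (Finset.mem_union_right _ (Finset.mem_image_of_mem _ hl))
    · intro hcon
      obtain ⟨m, hm, hmem⟩ := Finset.mem_sup.mp hcon
      rw [Bres, Finset.mem_filter, ← he, Equiv.symm_apply_apply] at hmem
      exact hnsup (Finset.mem_sup.mpr ⟨G m, Finset.mem_union_right _
        (Finset.mem_image_of_mem _ hm), hmem.2⟩)
  calc d ≤ D.card := hD
    _ ≤ (Finset.image (fun y => ((e.symm y : {x // x ∈ Pset B F S}) : Fin n))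
        ((L'.inf (Bres B F S)) \ (M'.sup (Bres B F S)))).card := Finset.card_le_card hDsub
    _ ≤ ((L'.inf (Bres B F S)) \ (M'.sup (Bres B F S))).card := Finset.card_image_le

/-- Main counting lemma: any CFF ground set is at least as large as the recursive sum. -/
private lemma cff_main (r w d : ℕ)
    (hd : 0 < d) (hs : 0 < s) (hsrw : s ≤ r + w) (ht : r + w ≤ t)
    (B : Fin t → Finset (Fin n)) (hB : IsCFF r w d n t B) :
    ∑ i ∈ Finset.Icc (s - w) (min r s), s.choose i * Ncff (r - i) (w - (s - i)) d (t - s)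
      ≤ n := by
  classical
  have hst : s ≤ t := le_trans hsrw ht
  set F := Fc hst with hF
  -- each pattern class supports a sub-CFF, hence is large
  have bound : ∀ S : Finset (Fin s), s - w ≤ S.card → S.card ≤ r →
      Ncff (r - S.card) (w - (s - S.card)) d (t - s) ≤ (Pset B F S).card := by
    intro S h1 h2
    have hSs : S.card ≤ s := by
      simpa using Finset.card_le_card (Finset.subset_univ S)
    have hsub := cff_sub r w d hst B hB S (by omega) h2
    by_cases hz : r - S.card = 0 ∨ w - (s - S.card) = 0
    · rw [Ncff, if_pos hz]
      -- build disjoint index sets of the right sizes to see the class is nonempty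
      set a := r - S.card with ha
      set b := w - (s - S.card) with hb
      have hab : a + b ≤ t - s := by omega
      have hL'bd : ∀ m ∈ Finset.range a, m < t - s := by
        intro m hm
        have := Finset.mem_range.mp hm
        omega
      have hM'bd : ∀ m ∈ Finset.Ico a (a + b), m < t - s := by
        intro m hm
        have := (Finset.mem_Ico.mp hm).2
        omega
      set L' := (Finset.range a).attachFin hL'bd with hL'
      set M' := ((Finset.Ico a (a + b)).attachFin hM'bd) with hM'
      have hdisj : Disjoint L' M' := by
        rw [Finset.disjoint_left]
        intro x hx1 hx2
        rw [hL', Finset.mem_attachFin, Finset.mem_range] at hx1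
        rw [hM', Finset.mem_attachFin, Finset.mem_Ico] at hx2
        omega
      have hcard := hsub L' M' hdisj
        (by rw [hL', Finset.card_attachFin, Finset.card_range])
        (by rw [hM', Finset.card_attachFin, Nat.card_Ico]; omega)
      have : d ≤ (Pset B F S).card := le_trans hcard
        (le_trans (Finset.card_le_univ _) (by simp; exact le_rfl))
      omega
    · rw [Ncff, if_neg hz]
      exact Nat.sInf_le ⟨Bres B F S, hsub⟩
  -- the pattern classes partition the ground set
  have hPn : ∀ S : Finset (Fin s), Pset B F S =
      Finset.univ.filter (fun x => Finset.univ.filter (fun j => x ∈ B (F j)) = S) := by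
    intro S
    ext x
    simp only [Pset, Finset.mem_filter, Finset.mem_univ, true_and]
    constructor
    · intro h
      ext j
      simp [h j]
    · intro h j
      rw [← h]
      simp
  have hn : n = ∑ S ∈ (Finset.univ : Finset (Fin s)).powerset, (Pset B F S).card := by
    have h := Finset.card_eq_sum_card_fiberwise
      (f := fun x : Fin n => Finset.univ.filter (fun j => x ∈ B (F j)))
      (s := Finset.univ) (t := Finset.univ.powerset)
      (fun x _ => Finset.mem_powerset.mpr (Finset.subset_univ _))
    rw [Finset.card_univ, Fintype.card_fin] at h
    exact h.trans (Finset.sum_congr rfl (fun S _ => by rw [hPn S]))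
  calc ∑ i ∈ Finset.Icc (s - w) (min r s), s.choose i * Ncff (r - i) (w - (s - i)) d (t - s)
      = ∑ i ∈ Finset.Icc (s - w) (min r s),
          ∑ S ∈ Finset.powersetCard i (Finset.univ : Finset (Fin s)),
            Ncff (r - i) (w - (s - i)) d (t - s) := by
        refine Finset.sum_congr rfl fun i _ => ?_
        rw [Finset.sum_const, Finset.card_powersetCard, Finset.card_univ, Fintype.card_fin,
          smul_eq_mul]
    _ ≤ ∑ i ∈ Finset.Icc (s - w) (min r s),
          ∑ S ∈ Finset.powersetCard i (Finset.univ : Finset (Fin s)), (Pset B F S).card := by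
        refine Finset.sum_le_sum fun i hi => Finset.sum_le_sum fun S hS => ?_
        have hcard := (Finset.mem_powersetCard.mp hS).2
        have hIcc := Finset.mem_Icc.mp hi
        rw [← hcard]
        exact bound S (by omega) (by omega)
    _ ≤ ∑ i ∈ Finset.range (s + 1),
          ∑ S ∈ Finset.powersetCard i (Finset.univ : Finset (Fin s)), (Pset B F S).card := by
        refine Finset.sum_le_sum_of_subset fun i hi => ?_
        have := Finset.mem_Icc.mp hi
        rw [Finset.mem_range]
        omega
    _ = ∑ S ∈ (Finset.univ : Finset (Fin s)).powerset, (Pset B F S).card := by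
        rw [Finset.sum_powerset, Finset.card_univ, Fintype.card_fin]
    _ = n := hn.symm

end Aux

/-- For positive integers `r, w, d, s, t` with `w ≤ r`, `0 < s ≤ r + w` and `t ≥ r + w`,
`N((r,w;d),t) ≥ Σ_{max(0,s−w) ≤ i ≤ min(r,s)} C(s,i) · N((r−i, w−s+i; d), t−s)`. -/
theorem cff_recursive_bound_first (r w d s t : ℕ)
    (hr : 0 < r) (hw : 0 < w) (hwr : w ≤ r) (hd : 0 < d)
    (hs : 0 < s) (hsrw : s ≤ r + w) (ht : r + w ≤ t) :
    ∑ i ∈ Finset.Icc (s - w) (min r s), s.choose i * Ncff (r - i) (w - (s - i)) d (t - s)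
      ≤ Ncff r w d t := by
  have hrw : ¬(r = 0 ∨ w = 0) := by omega
  have hN : Ncff r w d t = sInf {n : ℕ | ∃ B : Fin t → Finset (Fin n), IsCFF r w d n t B} := by
    rw [Ncff, if_neg hrw]
  rw [hN]
  refine le_csInf (cff_exists r w d t) ?_
  rintro n ⟨B, hB⟩
  exact cff_main r w d hd hs hsrw ht B hB
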